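/- Let a(t), b(t) ∈ C[t] be polynomials and let f ∈ C[[t]] satisfy the τ-difference equation f = a(t)·f^{(1)} + b(t)·f^{(2)} as formal power series. If the radius of convergence of f is strictly greater than 1, then the radius of convergence of f is infinite. -/

import Mathlib

open scoped NNReal ENNReal

/-- The radius of convergence of a power series `∑ f i * t ^ i` with coefficients in a
normed field: the supremum of all `r ≥ 0` such that the series converges at every point
of norm `< r`. -/
noncomputable def radiusOfConv {C : Type*} [NormedField C] (f : ℕ → C) : ℝ≥0∞ :=
  ⨆ (r : ℝ≥0) (_ : ∀ t₀ : C, ‖t₀‖ < (r : ℝ) → Summable fun i => f i * t₀ ^ i), (r : ℝ≥0∞)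

/-- The `k`-th Anderson twist of a formal power series: `f^{(k)} = ∑ f_i^{q^k} t^i`. -/
noncomputable def andersonTwist {C : Type*} [Field C] (q k : ℕ) (f : PowerSeries C) :
    PowerSeries C :=
  PowerSeries.mk fun i => (PowerSeries.coeff (R := C) i) f ^ q ^ k

open Filter Topology

/-- In a complete ultrametric normed group, a sequence whose terms tend to zero is summable. -/
lemma summable_of_tendsto_zero_ultra {C : Type*} [NormedAddCommGroup C]
    [CompleteSpace C] [IsUltrametricDist C] {u : ℕ → C}
    (h : Tendsto u atTop (𝓝 0)) : Summable u := by
  rw [summable_iff_vanishing_norm]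
  intro ε hε
  obtain ⟨N, hN⟩ := (Filter.eventually_atTop).mp
    ((NormedAddCommGroup.tendsto_nhds_zero.mp h) (ε / 2) (half_pos hε))
  refine ⟨Finset.range N, fun t ht => ?_⟩
  have hle : ‖∑ i ∈ t, u i‖ ≤ ε / 2 := by
    refine IsUltrametricDist.norm_sum_le_of_forall_le_of_nonneg (le_of_lt (half_pos hε))
      fun i hi => ?_
    have : N ≤ i := by
      by_contra hlt
      exact (Finset.disjoint_left.mp ht) hi (Finset.mem_range.mpr (Nat.lt_of_not_le hlt))
    exact le_of_lt (hN i this)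
  exact lt_of_le_of_lt hle (half_lt_self hε)

/-- Twisting: if `∑ g i * s₀ ^ i` is summable then `∑ g i ^ m * (s₀ ^ m) ^ i` is summable. -/
lemma summable_twist {C : Type*} [NormedField C] [CompleteSpace C] [IsUltrametricDist C]
    {g : ℕ → C} {s₀ : C} (hg : Summable fun i => g i * s₀ ^ i) {m : ℕ} (hm : 0 < m) :
    Summable fun i => g i ^ m * (s₀ ^ m) ^ i := by
  have h0 : Tendsto (fun i => g i * s₀ ^ i) atTop (𝓝 0) := hg.tendsto_atTop_zero
  have h1 : Tendsto (fun i => (g i * s₀ ^ i) ^ m) atTop (𝓝 0) := by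
    simpa [zero_pow hm.ne'] using h0.pow m
  apply summable_of_tendsto_zero_ultra
  convert h1 using 2 with i
  rw [mul_pow, ← pow_mul, ← pow_mul, mul_comm i m]

/-- Multiplication by a polynomial preserves summability at a point. -/
lemma summable_polyMul {C : Type*} [NormedField C] [CompleteSpace C]
    (a : Polynomial C) {g : ℕ → C} {t₀ : C} (hg : Summable fun i => g i * t₀ ^ i) :
    Summable fun n => (PowerSeries.coeff (R := C) n ((a : PowerSeries C) * PowerSeries.mk g)) * t₀ ^ n := by
  classical
  set d := a.natDegree with hd
  have key : ∀ n, (PowerSeries.coeff (R := C) n ((a : PowerSeries C) * PowerSeries.mk g)) * t₀ ^ n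
      = ∑ i ∈ Finset.range (d + 1),
          (if i ≤ n then a.coeff i * g (n - i) * t₀ ^ n else 0) := by
    intro n
    rw [PowerSeries.coeff_mul, Finset.Nat.sum_antidiagonal_eq_sum_range_succ_mk]
    simp only [Polynomial.coeff_coe, PowerSeries.coeff_mk]
    rw [Finset.sum_mul]
    set N := max (n + 1) (d + 1) with hN
    have h1 : ∑ i ∈ Finset.range (n + 1), a.coeff i * g (n - i) * t₀ ^ n
        = ∑ i ∈ Finset.range N, (if i ≤ n then a.coeff i * g (n - i) * t₀ ^ n else 0) := by
      have e1 : ∑ i ∈ Finset.range (n + 1), a.coeff i * g (n - i) * t₀ ^ n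
          = ∑ i ∈ Finset.range (n + 1), (if i ≤ n then a.coeff i * g (n - i) * t₀ ^ n else 0) :=
        Finset.sum_congr rfl fun i hi =>
          (if_pos (Nat.lt_succ_iff.mp (Finset.mem_range.mp hi))).symm
      rw [e1]
      refine Finset.sum_subset (Finset.range_subset_range.mpr (le_max_left _ _)) ?_
      intro i _ hi
      rw [if_neg (fun hle => hi (Finset.mem_range.mpr (Nat.lt_succ_of_le hle)))]
    have h2 : ∑ i ∈ Finset.range (d + 1), (if i ≤ n then a.coeff i * g (n - i) * t₀ ^ n else 0)
        = ∑ i ∈ Finset.range N, (if i ≤ n then a.coeff i * g (n - i) * t₀ ^ n else 0) := by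
      refine Finset.sum_subset (Finset.range_subset_range.mpr (le_max_right _ _)) ?_
      intro i _ hi
      have hdeg : a.coeff i = 0 := by
        apply Polynomial.coeff_eq_zero_of_natDegree_lt
        have := fun hle => hi (Finset.mem_range.mpr (Nat.lt_succ_of_le hle))
        exact Nat.lt_of_not_le this
      split_ifs <;> simp [hdeg]
    rw [h1, h2]
  have hsummand : ∀ i : ℕ,
      Summable (fun n => if i ≤ n then a.coeff i * g (n - i) * t₀ ^ n else 0) := by
    intro i
    rw [← summable_nat_add_iff i]
    have heqs : (fun n => if i ≤ n + i then a.coeff i * g (n + i - i) * t₀ ^ (n + i) else 0)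
        = fun n => (a.coeff i * t₀ ^ i) * (g n * t₀ ^ n) := by
      funext n
      rw [if_pos (Nat.le_add_left i n), Nat.add_sub_cancel, pow_add]
      ring
    rw [heqs]
    exact hg.mul_left _
  exact (summable_sum (fun i _ => hsummand i)).congr fun n => (key n).symm

/-- One iteration step: the functional equation upgrades convergence on `|t| < r` to `|t| < r^q`. -/
lemma step_lemma {C : Type*} [NormedField C] [CompleteSpace C] [IsAlgClosed C]
    [IsUltrametricDist C] {q : ℕ} (hq2 : 2 ≤ q)
    {f : ℕ → C} {a b : Polynomial C}
    (heq : PowerSeries.mk f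
      = (a : PowerSeries C) * andersonTwist q 1 (PowerSeries.mk f)
        + (b : PowerSeries C) * andersonTwist q 2 (PowerSeries.mk f))
    {r : ℝ} (hr : 1 ≤ r)
    (h : ∀ t₀ : C, ‖t₀‖ < r → Summable fun i => f i * t₀ ^ i) :
    ∀ t₀ : C, ‖t₀‖ < r ^ q → Summable fun i => f i * t₀ ^ i := by
  intro t₀ ht
  have hq0 : 0 < q := lt_of_lt_of_le two_pos hq2
  obtain ⟨s₀, hs₀⟩ := IsAlgClosed.exists_pow_nat_eq t₀ hq0
  obtain ⟨u₀, hu₀⟩ := IsAlgClosed.exists_pow_nat_eq t₀ (pow_pos hq0 2)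
  have hs : ‖s₀‖ < r := by
    refine lt_of_pow_lt_pow_left₀ q (le_trans zero_le_one hr) ?_
    rw [← norm_pow, hs₀]; exact ht
  have hu : ‖u₀‖ < r := by
    refine lt_of_pow_lt_pow_left₀ (q ^ 2) (le_trans zero_le_one hr) ?_
    rw [← norm_pow, hu₀]
    exact lt_of_lt_of_le ht (pow_le_pow_right₀ hr (Nat.le_self_pow two_ne_zero q))
  have hg1 : Summable fun i => f i ^ q * t₀ ^ i := by
    have := summable_twist (h s₀ hs) hq0
    rwa [hs₀] at this
  have hg2 : Summable fun i => f i ^ q ^ 2 * t₀ ^ i := by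
    have := summable_twist (h u₀ hu) (pow_pos hq0 2)
    rwa [hu₀] at this
  have h1 := summable_polyMul a hg1
  have h2 := summable_polyMul b hg2
  refine (h1.add h2).congr fun n => ?_
  have hco := congrArg (PowerSeries.coeff (R := C) n) heq
  rw [map_add] at hco
  have ht1 : andersonTwist q 1 (PowerSeries.mk f) = PowerSeries.mk (fun i => f i ^ q) := by
    ext i; simp [andersonTwist]
  have ht2 : andersonTwist q 2 (PowerSeries.mk f) = PowerSeries.mk (fun i => f i ^ q ^ 2) := by
    ext i; simp [andersonTwist]
  rw [ht1, ht2, PowerSeries.coeff_mk] at hco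
  rw [← add_mul, ← hco]

/-- If `f ∈ C[[t]]` satisfies a τ-difference equation `f = a(t) f^{(1)} + b(t) f^{(2)}`
with polynomial coefficients and has radius of convergence `> 1`, then its radius of
convergence is infinite. -/
theorem radius_infinite_of_tau_difference
    {C : Type*} [NormedField C] [CompleteSpace C] [IsAlgClosed C] [IsUltrametricDist C]
    (p e : ℕ) (hp : p.Prime) (he : 0 < e) [CharP C p]
    (q : ℕ) (hq : q = p ^ e)
    (f : ℕ → C) (a b : Polynomial C)
    (heq : PowerSeries.mk f
      = (a : PowerSeries C) * andersonTwist q 1 (PowerSeries.mk f)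
        + (b : PowerSeries C) * andersonTwist q 2 (PowerSeries.mk f))
    (hrad : 1 < radiusOfConv f) :
    radiusOfConv f = ⊤ := by
  have hq2 : 2 ≤ q := hq ▸ Nat.one_lt_pow he.ne' hp.one_lt
  -- extract a radius r > 1 on which f converges
  rw [radiusOfConv, lt_iSup_iff] at hrad
  obtain ⟨r, hr⟩ := hrad
  by_cases hP : ∀ t₀ : C, ‖t₀‖ < (r : ℝ) → Summable fun i => f i * t₀ ^ i
  swap
  · simp [hP] at hr
  rw [iSup_pos hP] at hr
  have hr1 : (1 : ℝ) < (r : ℝ) := by exact_mod_cast hr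
  -- iterate the step lemma
  have key : ∀ n : ℕ, ∀ t₀ : C, ‖t₀‖ < (r : ℝ) ^ q ^ n → Summable fun i => f i * t₀ ^ i := by
    intro n
    induction n with
    | zero => simpa using hP
    | succ n ih =>
      have h1 : (1 : ℝ) ≤ (r : ℝ) ^ q ^ n := one_le_pow₀ hr1.le
      have := step_lemma hq2 heq h1 ih
      intro t₀ ht₀
      refine this t₀ ?_
      rwa [← pow_mul, ← pow_succ]
  have hall : ∀ t₀ : C, Summable fun i => f i * t₀ ^ i := by
    intro t₀
    obtain ⟨n, hn⟩ := ((tendsto_pow_atTop_atTop_of_one_lt hr1).eventually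
      (Filter.eventually_gt_atTop ‖t₀‖)).exists
    refine key n t₀ (lt_of_lt_of_le hn ?_)
    exact pow_le_pow_right₀ hr1.le (Nat.le_of_lt (Nat.lt_pow_self (lt_of_lt_of_le one_lt_two hq2) : n < q ^ n))
  refine ENNReal.eq_top_of_forall_nnreal_le fun R => ?_
  exact le_iSup₂ (f := fun (s : ℝ≥0)
      (_ : ∀ t₀ : C, ‖t₀‖ < (s : ℝ) → Summable fun i => f i * t₀ ^ i) => (s : ℝ≥0∞))
    R (fun t₀ _ => hall t₀)
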